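/- (Lemma 5.1) Under the LSPE setup, θ̂₁ − θ₁ = Σ_{h=1}^{H} ( ∏_{h′=1}^{h−1} Λ̂_{h′}^{−1}Φ_{h′}ᵀΦ̄_{h′+1} ) · ( Λ̂_h^{−1}Φ_hᵀξ_h − λ·Λ̂_h^{−1}θ_h ), where the matrix product over h′ is taken in increasing order of h′ and the empty product (h = 1) is the identity matrix I_d. In particular, for any positive semidefinite d×d matrix Λ̄₁, the squared weighted error (θ̂₁ − θ₁)ᵀΛ̄₁(θ̂₁ − θ₁) equals the squared Λ̄₁-weighted norm of this sum. -/

import Mathlib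

open Matrix

/-- The ridge-regularized covariance matrix `Λ̂ = Φᵀ Φ + λ I`. -/
noncomputable def Lhat {N d : ℕ} (lam : ℝ) (Φ : Matrix (Fin N) (Fin d) ℝ) :
    Matrix (Fin d) (Fin d) ℝ :=
  Φᵀ * Φ + lam • 1

lemma unroll {d H : ℕ} (g : ℕ → Matrix (Fin d) (Fin d) ℝ) (e : ℕ → Fin d → ℝ)
    (x : ℕ → Fin d → ℝ) (hx0 : x (H + 1) = 0)
    (hstep : ∀ s, 1 ≤ s → s ≤ H → x s = e s + g s *ᵥ x (s + 1)) :
    ∀ t s, 1 ≤ s → s + t = H + 1 →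
      x s = ∑ h ∈ Finset.Icc s H,
        (((List.range (h - s)).map fun i => g (s + i)).prod) *ᵥ e h := by
  intro t
  induction t with
  | zero =>
    intro s hs1 hs; simp only [Nat.add_zero] at hs; subst hs
    rw [Finset.Icc_eq_empty (by omega), Finset.sum_empty, hx0]
  | succ t ih =>
    intro s hs1 hs
    have hsH : s ≤ H := by omega
    rw [hstep s hs1 hsH, ih (s + 1) (by omega) (by omega)]
    rw [← Finset.insert_Icc_add_one_left_eq_Icc hsH, Finset.sum_insert (by simp)]
    congr 1
    · simp
    · rw [show (g s *ᵥ ∑ h ∈ Finset.Icc (s + 1) H,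
          (List.map (fun i => g (s + 1 + i)) (List.range (h - (s + 1)))).prod *ᵥ e h) =
          ∑ h ∈ Finset.Icc (s + 1) H,
            g s *ᵥ ((List.map (fun i => g (s + 1 + i)) (List.range (h - (s + 1)))).prod *ᵥ e h)
        from map_sum (g s).mulVecLin _ _]
      refine Finset.sum_congr rfl fun h hh => ?_
      have hh' : s + 1 ≤ h := (Finset.mem_Icc.mp hh).1
      have hmat : (List.map (fun i => g (s + i)) (List.range (h - s))).prod =
          g s * (List.map (fun i => g (s + 1 + i)) (List.range (h - (s + 1)))).prod := by
        have hz : h - s = (h - (s + 1)) + 1 := by omega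
        rw [hz, List.range_succ_eq_map, List.map_cons, List.prod_cons, List.map_map]
        congr 2
        apply List.map_congr_left
        intro i _
        show g (s + (i + 1)) = g (s + 1 + i)
        rw [show s + (i + 1) = s + 1 + i from by omega]
      rw [Matrix.mulVec_mulVec, hmat]

lemma lhat_posDef {N d : ℕ} (hd : 1 ≤ d) {lam : ℝ} (hlam : 0 < lam)
    (Φ : Matrix (Fin N) (Fin d) ℝ) : (Lhat lam Φ).PosDef := by
  have h1 : (Φᵀ * Φ).PosSemidef := by
    simpa using Matrix.posSemidef_conjTranspose_mul_self Φ
  have h2 : ((lam • 1 : Matrix (Fin d) (Fin d) ℝ)).PosDef := by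
    have : Nonempty (Fin d) := ⟨⟨0, hd⟩⟩
    rw [Matrix.smul_one_eq_diagonal]
    exact Matrix.posDef_diagonal_iff.mpr fun _ => hlam
  exact Matrix.PosDef.posSemidef_add h1 h2

theorem stmt3 (N d H : ℕ) (hN : 1 ≤ N) (hd : 1 ≤ d) (hH : 1 ≤ H)
    (lam : ℝ) (hlam : 0 < lam)
    (Φ Φbar : ℕ → Matrix (Fin N) (Fin d) ℝ) (r ξ : ℕ → Fin N → ℝ)
    (θ θhat : ℕ → Fin d → ℝ)
    (hΦbar : Φbar (H + 1) = 0) (hθ : θ (H + 1) = 0)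
    (hreal : ∀ h, 1 ≤ h → h ≤ H →
      r h + Φbar (h + 1) *ᵥ θ (h + 1) = Φ h *ᵥ θ h + ξ h)
    (hθhat0 : θhat (H + 1) = 0)
    (hθhat : ∀ h, 1 ≤ h → h ≤ H →
      θhat h = (Lhat lam (Φ h))⁻¹ *ᵥ ((Φ h)ᵀ *ᵥ (r h + Φbar (h + 1) *ᵥ θhat (h + 1)))) :
    θhat 1 - θ 1 =
      (∑ h ∈ Finset.Icc 1 H,
        (((List.range (h - 1)).map
            fun i => (Lhat lam (Φ (i + 1)))⁻¹ * (Φ (i + 1))ᵀ * Φbar (i + 2)).prod) *ᵥ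
          ((Lhat lam (Φ h))⁻¹ *ᵥ ((Φ h)ᵀ *ᵥ ξ h) - lam • ((Lhat lam (Φ h))⁻¹ *ᵥ θ h))) ∧
    ∀ Λbar1 : Matrix (Fin d) (Fin d) ℝ, Λbar1.PosSemidef →
      (θhat 1 - θ 1) ⬝ᵥ (Λbar1 *ᵥ (θhat 1 - θ 1)) =
      (∑ h ∈ Finset.Icc 1 H,
        (((List.range (h - 1)).map
            fun i => (Lhat lam (Φ (i + 1)))⁻¹ * (Φ (i + 1))ᵀ * Φbar (i + 2)).prod) *ᵥ
          ((Lhat lam (Φ h))⁻¹ *ᵥ ((Φ h)ᵀ *ᵥ ξ h) - lam • ((Lhat lam (Φ h))⁻¹ *ᵥ θ h))) ⬝ᵥ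
      (Λbar1 *ᵥ
        ∑ h ∈ Finset.Icc 1 H,
          (((List.range (h - 1)).map
              fun i => (Lhat lam (Φ (i + 1)))⁻¹ * (Φ (i + 1))ᵀ * Φbar (i + 2)).prod) *ᵥ
            ((Lhat lam (Φ h))⁻¹ *ᵥ ((Φ h)ᵀ *ᵥ ξ h) - lam • ((Lhat lam (Φ h))⁻¹ *ᵥ θ h))) := by
  set g : ℕ → Matrix (Fin d) (Fin d) ℝ :=
    fun j => (Lhat lam (Φ j))⁻¹ * (Φ j)ᵀ * Φbar (j + 1) with hg
  set e : ℕ → Fin d → ℝ :=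
    fun h => (Lhat lam (Φ h))⁻¹ *ᵥ ((Φ h)ᵀ *ᵥ ξ h) - lam • ((Lhat lam (Φ h))⁻¹ *ᵥ θ h) with he
  have hstep : ∀ s, 1 ≤ s → s ≤ H →
      (θhat s - θ s) = e s + g s *ᵥ (θhat (s + 1) - θ (s + 1)) := by
    intro s hs1 hsH
    have hpd := lhat_posDef hd hlam (Φ s)
    have hdet : IsUnit (Lhat lam (Φ s)).det := (Matrix.isUnit_iff_isUnit_det _).mp hpd.isUnit
    have hLmul : (Lhat lam (Φ s))⁻¹ * ((Φ s)ᵀ * Φ s)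
        = 1 - lam • (Lhat lam (Φ s))⁻¹ := by
      have h1 : (Φ s)ᵀ * Φ s = Lhat lam (Φ s) - lam • 1 := by simp [Lhat]
      rw [h1, Matrix.mul_sub, Matrix.nonsing_inv_mul _ hdet, Matrix.mul_smul, Matrix.mul_one]
    have hr : r s + Φbar (s + 1) *ᵥ θhat (s + 1)
        = (Φ s *ᵥ θ s + ξ s) + Φbar (s + 1) *ᵥ (θhat (s + 1) - θ (s + 1)) := by
      rw [Matrix.mulVec_sub, ← hreal s hs1 hsH]
      abel
    rw [hθhat s hs1 hsH, hr]
    simp only [Matrix.mulVec_add, Matrix.mulVec_mulVec]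
    rw [hLmul, Matrix.sub_mulVec, Matrix.one_mulVec, Matrix.smul_mulVec]
    simp only [he, hg, Matrix.mulVec_mulVec, Matrix.mul_assoc]
    abel
  have hx0 : θhat (H + 1) - θ (H + 1) = 0 := by rw [hθhat0, hθ, sub_zero]
  have hmain := unroll g e (fun h => θhat h - θ h) hx0 hstep H 1 le_rfl (by omega)
  have hfun : ∀ h : ℕ,
      (List.map (fun i => g (1 + i)) (List.range (h - 1))).prod =
      (List.map (fun i => (Lhat lam (Φ (i + 1)))⁻¹ * (Φ (i + 1))ᵀ * Φbar (i + 2))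
        (List.range (h - 1))).prod := by
    intro h
    congr 1
    apply List.map_congr_left
    intro i _
    rw [hg]
    rw [show 1 + i = i + 1 from by omega]
  have key : θhat 1 - θ 1 =
      ∑ h ∈ Finset.Icc 1 H,
        (((List.range (h - 1)).map
            fun i => (Lhat lam (Φ (i + 1)))⁻¹ * (Φ (i + 1))ᵀ * Φbar (i + 2)).prod) *ᵥ
          ((Lhat lam (Φ h))⁻¹ *ᵥ ((Φ h)ᵀ *ᵥ ξ h) - lam • ((Lhat lam (Φ h))⁻¹ *ᵥ θ h)) := by
    rw [hmain]
    exact Finset.sum_congr rfl fun h _ => by rw [← hfun h]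
  exact ⟨key, fun Λbar1 _ => by rw [key]⟩
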